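/- Every 1-identifying code in the undirected binary de Bruijn graph B(2,3) has cardinality at least 4 (so the code {001, 010, 011, 101} is minimum). -/

import Mathlib

/-- The undirected de Bruijn graph `B(d,n)`: vertices are strings of length `n`
over the alphabet `{0, ..., d-1}`, and two distinct strings `x`, `y` are adjacent
iff `x_{i+1} = y_i` for all valid `i`, or `y_{i+1} = x_i` for all valid `i`. -/
def deBruijnGraph (d n : ℕ) : SimpleGraph (Fin n → Fin d) where
  Adj x y := x ≠ y ∧
    ((∀ i : Fin n, ∀ h : (i : ℕ) + 1 < n, x ⟨(i : ℕ) + 1, h⟩ = y i) ∨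
     (∀ i : Fin n, ∀ h : (i : ℕ) + 1 < n, y ⟨(i : ℕ) + 1, h⟩ = x i))
  symm := ⟨fun x y ⟨hxy, h⟩ => ⟨hxy.symm, h.symm⟩⟩
  loopless := ⟨fun x ⟨hxx, _⟩ => hxx rfl⟩

/-- The ball of radius `t` around a vertex `x`. -/
def ball {V : Type*} (G : SimpleGraph V) (t : ℕ) (x : V) : Set V :=
  {y | G.dist x y ≤ t}

/-- A set `S` of vertices is a `t`-identifying code if every ball of radius `t`
meets `S`, and distinct vertices have distinct identifying sets `B_t(x) ∩ S`. -/
def IsIdentifyingCode {V : Type*} (G : SimpleGraph V) (t : ℕ) (S : Set V) : Prop :=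
  (∀ x : V, (ball G t x ∩ S).Nonempty) ∧
  ∀ x y : V, x ≠ y → ball G t x ∩ S ≠ ball G t y ∩ S

theorem min_code_B23 (S : Set (Fin 3 → Fin 2))
    (hS : IsIdentifyingCode (deBruijnGraph 2 3) 1 S) : 4 ≤ S.ncard := by
  classical
  obtain ⟨h1, h2⟩ := hS
  set G := deBruijnGraph 2 3 with hG
  set T : Finset (Fin 3 → Fin 2) := S.toFinset with hTdef
  have hT : S.ncard = T.card := (Set.ncard_eq_toFinset_card' S)
  by_contra h
  push_neg at h
  have hk : T.card ≤ 3 := by omega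
  set f : (Fin 3 → Fin 2) → Finset (Fin 3 → Fin 2) :=
    fun x => (ball G 1 x ∩ S).toFinset with hf
  have hmem : ∀ x, f x ∈ T.powerset.erase ∅ := by
    intro x
    rw [Finset.mem_erase, Finset.mem_powerset]
    constructor
    · have := h1 x
      rw [← Finset.nonempty_iff_ne_empty]
      simp only [f, Set.toFinset_nonempty]
      exact this
    · intro a ha
      simp only [f, Set.mem_toFinset, Set.mem_inter_iff] at ha
      simpa [hTdef] using ha.2
  have hinj : ∀ a ∈ (Finset.univ : Finset (Fin 3 → Fin 2)), ∀ b ∈ Finset.univ,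
      f a = f b → a = b := by
    intro a _ b _ hab
    by_contra hne
    apply h2 a b hne
    have := congrArg (fun (u : Finset (Fin 3 → Fin 2)) => (u : Set (Fin 3 → Fin 2))) hab
    simpa [f] using this
  have hcard := Finset.card_le_card_of_injOn f (fun x _ => hmem x) hinj
  have huniv : (Finset.univ : Finset (Fin 3 → Fin 2)).card = 8 := by decide
  have hpow : T.powerset.card = 2 ^ T.card := Finset.card_powerset T
  have herase : (T.powerset.erase ∅).card = T.powerset.card - 1 :=
    Finset.card_erase_of_mem (Finset.empty_mem_powerset T)
  have h2k : 2 ^ T.card ≤ 2 ^ 3 := Nat.pow_le_pow_right (by norm_num) hk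
  omega
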